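/- (Simons' identity) For every natural number n and every complex number x, the sum over k from 0 to n of (−1)^{n−k}·binom(n,k)·binom(n+k,k)·(1+x)^k equals the sum over k from 0 to n of binom(n,k)·binom(n+k,k)·x^k, where binom denotes the ordinary binomial coefficient of natural numbers. -/

import Mathlib

open Finset

/-- Finite difference lemma: `∑ i, (-1)^i C(m,i) C(a+i,n) = (-1)^m C(a, n-m)` for `m ≤ n`. -/
lemma diff_lemma (n : ℕ) : ∀ m, m ≤ n → ∀ a : ℕ,
    ∑ i ∈ Finset.range (m + 1),
      (-1 : ℂ) ^ i * (m.choose i : ℂ) * (((a + i).choose n : ℕ) : ℂ)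
      = (-1 : ℂ) ^ m * ((a.choose (n - m) : ℕ) : ℂ) := by
  intro m
  induction m with
  | zero => intro _ a; simp
  | succ m ih =>
    intro hm a
    have hmn : m ≤ n := Nat.le_of_succ_le hm
    have hG2 : ∑ i ∈ Finset.range (m + 1),
        (-1 : ℂ) ^ i * (m.choose (i + 1) : ℂ) * (((a + (i + 1)).choose n : ℕ) : ℂ)
        = ((a.choose n : ℕ) : ℂ) - ∑ i ∈ Finset.range (m + 1),
            (-1 : ℂ) ^ i * (m.choose i : ℂ) * (((a + i).choose n : ℕ) : ℂ) := by
      rw [Finset.sum_range_succ,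
        Finset.sum_range_succ' (fun i => (-1 : ℂ) ^ i * (m.choose i : ℂ)
          * (((a + i).choose n : ℕ) : ℂ)) m]
      simp only [Nat.choose_succ_self, Nat.cast_zero, mul_zero, zero_mul, add_zero,
        pow_zero, Nat.choose_zero_right, Nat.cast_one, one_mul, Nat.add_zero]
      have h1 : ∀ i ∈ Finset.range m,
          (-1 : ℂ) ^ (i + 1) * (m.choose (i + 1) : ℂ) * (((a + (i + 1)).choose n : ℕ) : ℂ)
          = -((-1 : ℂ) ^ i * (m.choose (i + 1) : ℂ) * (((a + (i + 1)).choose n : ℕ) : ℂ)) := by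
        intro i _; rw [pow_succ]; ring
      rw [Finset.sum_congr rfl h1, Finset.sum_neg_distrib]
      ring
    rw [Finset.sum_range_succ']
    have expand : ∀ i ∈ Finset.range (m + 1),
        (-1 : ℂ) ^ (i + 1) * ((m + 1).choose (i + 1) : ℂ) * (((a + (i + 1)).choose n : ℕ) : ℂ)
        = -((-1 : ℂ) ^ i * (m.choose i : ℂ) * ((((a + 1) + i).choose n : ℕ) : ℂ))
          - (-1 : ℂ) ^ i * (m.choose (i + 1) : ℂ) * (((a + (i + 1)).choose n : ℕ) : ℂ) := by
      intro i _
      have hidx : a + (i + 1) = (a + 1) + i := by ring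
      rw [Nat.choose_succ_succ, hidx, pow_succ]
      push_cast
      ring
    rw [Finset.sum_congr rfl expand, Finset.sum_sub_distrib, Finset.sum_neg_distrib,
      hG2, ih hmn a, ih hmn (a + 1)]
    simp only [pow_zero, Nat.choose_zero_right, Nat.cast_one, one_mul, Nat.add_zero]
    have hr : n - m = (n - (m + 1)) + 1 := by omega
    rw [hr, Nat.choose_succ_succ a (n - (m + 1))]
    push_cast
    ring

/-- Simons' identity. -/
theorem simons_identity (n : ℕ) (x : ℂ) :
    ∑ k ∈ Finset.range (n + 1),
        (-1 : ℂ) ^ (n - k) * (n.choose k : ℂ) * ((n + k).choose k : ℂ) * (1 + x) ^ k =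
      ∑ k ∈ Finset.range (n + 1), (n.choose k : ℂ) * ((n + k).choose k : ℂ) * x ^ k := by
  have key : ∀ j ∈ Finset.range (n + 1),
      ∑ k ∈ Finset.range (n + 1),
        (-1 : ℂ) ^ (n - k) * (n.choose k : ℂ) * ((n + k).choose k : ℂ) * (k.choose j : ℂ)
      = (n.choose j : ℂ) * ((n + j).choose j : ℂ) := by
    intro j hj
    have hjn : j ≤ n := Nat.lt_succ_iff.mp (Finset.mem_range.mp hj)
    have step1 : ∑ k ∈ Finset.range (n + 1),
        (-1 : ℂ) ^ (n - k) * (n.choose k : ℂ) * ((n + k).choose k : ℂ) * (k.choose j : ℂ)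
        = ∑ k ∈ Finset.Ico j (n + 1),
        (-1 : ℂ) ^ (n - k) * (n.choose k : ℂ) * ((n + k).choose k : ℂ) * (k.choose j : ℂ) := by
      refine (Finset.sum_subset ?_ ?_).symm
      · intro k hk
        simp only [Finset.mem_Ico, Finset.mem_range] at *
        omega
      · intro k hk hk2
        simp only [Finset.mem_Ico, Finset.mem_range] at *
        have : k < j := by omega
        simp [Nat.choose_eq_zero_of_lt this]
    rw [step1, Finset.sum_Ico_eq_sum_range]
    have hrange : n + 1 - j = (n - j) + 1 := by omega
    rw [hrange]
    have hterm : ∀ i ∈ Finset.range ((n - j) + 1),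
        (-1 : ℂ) ^ (n - (j + i)) * (n.choose (j + i) : ℂ) * ((n + (j + i)).choose (j + i) : ℂ)
          * ((j + i).choose j : ℂ)
        = (n.choose j : ℂ) * (-1) ^ (n - j)
          * ((-1 : ℂ) ^ i * ((n - j).choose i : ℂ) * (((n + j + i).choose n : ℕ) : ℂ)) := by
      intro i hi
      have hi' : i ≤ n - j := Nat.lt_succ_iff.mp (Finset.mem_range.mp hi)
      have hsgn : (-1 : ℂ) ^ (n - (j + i)) = (-1) ^ (n - j) * (-1) ^ i := by
        have h3 : (n - j) + i = (n - (j + i)) + 2 * i := by omega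
        rw [← pow_add, h3, pow_add, pow_mul]
        norm_num
      have hc2 : (n + (j + i)).choose (j + i) = (n + j + i).choose n := by
        have h := Nat.choose_symm (Nat.le_add_left (j + i) n)
        rw [Nat.add_sub_cancel] at h
        rw [← h, Nat.add_assoc]
      have hc1 : n.choose (j + i) * ((j + i).choose j) = n.choose j * ((n - j).choose i) := by
        have h := Nat.choose_mul (n := n) (Nat.le_add_right j i)
        rwa [Nat.add_sub_cancel_left] at h
      have hc1C : (n.choose (j + i) : ℂ) * ((j + i).choose j : ℂ)
          = (n.choose j : ℂ) * ((n - j).choose i : ℂ) := by exact_mod_cast congrArg Nat.cast hc1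
      rw [hsgn, hc2]
      linear_combination ((-1 : ℂ) ^ (n - j) * (-1 : ℂ) ^ i * ((n + j + i).choose n : ℂ)) * hc1C
    rw [Finset.sum_congr rfl hterm, ← Finset.mul_sum,
      diff_lemma n (n - j) (Nat.sub_le n j) (n + j)]
    have hnm : n - (n - j) = j := by omega
    rw [hnm]
    have hsq : (-1 : ℂ) ^ (n - j) * (-1 : ℂ) ^ (n - j) = 1 := by
      rw [← mul_pow]; norm_num
    linear_combination ((n.choose j : ℂ) * (((n + j).choose j : ℕ) : ℂ)) * hsq
  calc
    ∑ k ∈ Finset.range (n + 1),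
        (-1 : ℂ) ^ (n - k) * (n.choose k : ℂ) * ((n + k).choose k : ℂ) * (1 + x) ^ k
      = ∑ k ∈ Finset.range (n + 1), ∑ j ∈ Finset.range (n + 1),
        (-1 : ℂ) ^ (n - k) * (n.choose k : ℂ) * ((n + k).choose k : ℂ) * (k.choose j : ℂ)
          * x ^ j := by
        refine Finset.sum_congr rfl fun k hk => ?_
        have hk' : k ≤ n := Nat.lt_succ_iff.mp (Finset.mem_range.mp hk)
        have hpow : (1 + x) ^ k = ∑ j ∈ Finset.range (n + 1), (k.choose j : ℂ) * x ^ j := by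
          rw [add_comm, add_pow]
          simp only [one_pow, mul_one]
          have h1 : ∑ j ∈ Finset.range (k + 1), x ^ j * (k.choose j : ℂ)
              = ∑ j ∈ Finset.range (n + 1), x ^ j * (k.choose j : ℂ) := by
            refine Finset.sum_subset (Finset.range_subset_range.mpr (Nat.succ_le_succ hk')) ?_
            intro j hj hj2
            have : k < j := by
              simp only [Finset.mem_range] at *
              omega
            simp [Nat.choose_eq_zero_of_lt this]
          rw [h1]
          exact Finset.sum_congr rfl fun j _ => by ring
        rw [hpow, Finset.mul_sum]
        exact Finset.sum_congr rfl fun j _ => by ring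
    _ = ∑ j ∈ Finset.range (n + 1), ∑ k ∈ Finset.range (n + 1),
        (-1 : ℂ) ^ (n - k) * (n.choose k : ℂ) * ((n + k).choose k : ℂ) * (k.choose j : ℂ)
          * x ^ j := Finset.sum_comm
    _ = ∑ j ∈ Finset.range (n + 1), (n.choose j : ℂ) * ((n + j).choose j : ℂ) * x ^ j := by
        refine Finset.sum_congr rfl fun j hj => ?_
        rw [← Finset.sum_mul, key j hj]
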